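/- Let G be a 3-regular graph of order n. If X is a 2-fair dominating set of G with |X| = k, then k ≥ 2n/5. -/
import Mathlib


/-- `S` is a `k`-fair dominating set of `G`: every vertex outside `S` has exactly `k`
neighbors in `S`. -/
def SimpleGraph.KFairDom {V : Type*} (G : SimpleGraph V) (k : ℕ) (S : Set V) : Prop :=
  ∀ v ∉ S, (G.neighborSet v ∩ S).ncard = k

/-- Disjoint sets `A`, `B` form a `k`-fair coalition: neither is a `k`-fair dominating
set, but their union is. -/
def SimpleGraph.KFairCoalition {V : Type*} (G : SimpleGraph V) (k : ℕ) (A B : Set V) : Prop :=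
  Disjoint A B ∧ ¬ G.KFairDom k A ∧ ¬ G.KFairDom k B ∧ G.KFairDom k (A ∪ B)

/-- `P` is a `k`-fair coalition partition of `G`: a partition of the vertex set into
nonempty blocks, each of which is either a `k`-fair dominating set with exactly `k`
vertices or forms a `k`-fair coalition with another block. -/
def SimpleGraph.IsKFairCoalPartition {V : Type*} (G : SimpleGraph V) (k : ℕ)
    (P : Set (Set V)) : Prop :=
  (∀ A ∈ P, A.Nonempty) ∧ ⋃₀ P = Set.univ ∧ P.PairwiseDisjoint id ∧
  ∀ A ∈ P, (G.KFairDom k A ∧ A.ncard = k) ∨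
    (¬ G.KFairDom k A ∧ ∃ B ∈ P, B ≠ A ∧ G.KFairCoalition k A B)

/-- The `k`-fair coalition number `C_{kf}(G)`: the maximum size of a `k`-fair coalition
partition of `G`. -/
noncomputable def SimpleGraph.kFairCoalNum {V : Type*} (G : SimpleGraph V) (k : ℕ) : ℕ :=
  sSup {n | ∃ P : Set (Set V), G.IsKFairCoalPartition k P ∧ P.ncard = n}

/-- The `k`-fair domatic number `d_{kf}(G)`: the maximum size of a partition of the
vertex set into `k`-fair dominating sets. -/
noncomputable def SimpleGraph.kFairDomaticNum {V : Type*} (G : SimpleGraph V) (k : ℕ) : ℕ :=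
  sSup {n | ∃ P : Set (Set V), (∀ A ∈ P, A.Nonempty) ∧ ⋃₀ P = Set.univ ∧
    P.PairwiseDisjoint id ∧ (∀ A ∈ P, G.KFairDom k A) ∧ P.ncard = n}

theorem twoFairDom_card_cubic {V : Type*} [Fintype V] (G : SimpleGraph V)
    [DecidableRel G.Adj] (hreg : G.IsRegularOfDegree 3) (X : Set V) (k : ℕ)
    (hX : G.KFairDom 2 X) (hk : X.ncard = k) : 2 * Fintype.card V ≤ 5 * k := by
  classical
  set S : Finset V := X.toFinset with hS
  have hcard : S.card = k := by
    rw [hS, ← hk, Set.ncard_eq_toFinset_card']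
  have hkn : k ≤ Fintype.card V := by
    rw [← hcard]; exact Finset.card_le_univ S
  -- each vertex outside S has exactly 2 neighbors in S
  have hfair : ∀ v ∈ Sᶜ, (S.filter (G.Adj v)).card = 2 := by
    intro v hv
    have hv' : v ∉ X := by simpa [hS] using Finset.mem_compl.mp hv
    have h2 := hX v hv'
    rw [← h2, ← Set.ncard_coe_finset]
    congr 1
    ext u
    simp [hS, SimpleGraph.mem_neighborSet, and_comm]
  -- double counting
  have key : ∑ v ∈ Sᶜ, (S.filter (G.Adj v)).card
      = ∑ u ∈ S, (Sᶜ.filter (G.Adj u)).card := by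
    simp only [Finset.card_filter]
    rw [Finset.sum_comm]
    apply Finset.sum_congr rfl
    intro u _
    apply Finset.sum_congr rfl
    intro v _
    simp [SimpleGraph.adj_comm]
  have hleft : ∑ v ∈ Sᶜ, (S.filter (G.Adj v)).card
      = 2 * (Fintype.card V - k) := by
    rw [Finset.sum_congr rfl hfair, Finset.sum_const, smul_eq_mul,
      Finset.card_compl, hcard, mul_comm]
  have hright : ∑ u ∈ S, (Sᶜ.filter (G.Adj u)).card ≤ 3 * k := by
    calc ∑ u ∈ S, (Sᶜ.filter (G.Adj u)).card
        ≤ ∑ u ∈ S, 3 := by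
          apply Finset.sum_le_sum
          intro u _
          have hsub : Sᶜ.filter (G.Adj u) ⊆ G.neighborFinset u := by
            intro v hv
            simp only [Finset.mem_filter] at hv
            simpa [SimpleGraph.mem_neighborFinset] using hv.2
          have := Finset.card_le_card hsub
          rwa [SimpleGraph.card_neighborFinset_eq_degree, hreg u] at this
      _ = 3 * k := by rw [Finset.sum_const, smul_eq_mul, hcard, mul_comm]
  have : 2 * (Fintype.card V - k) ≤ 3 * k := by
    rw [← hleft, key]; exact hright
  omega
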